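/- For every initial condition (ξ₀, θ₀, α₀) ∈ ℝ³ there is a unique solution γ = (ξ, θ, α) of the ODE system (*) with γ(0) = (ξ₀, θ₀, α₀); this solution is smooth and is defined on all of ℝ (i.e. solutions exist for all times). -/

import Mathlib

/-- The constant `m = m₁ + m₂ + 2/g`. -/
noncomputable def mconst (g m₁ m₂ : ℕ) : ℝ := (m₁ : ℝ) + (m₂ : ℝ) + 2 / (g : ℝ)

/-- The angle `θ* = arctan √(m₁/m₂)`. -/
noncomputable def thetaStar (m₁ m₂ : ℕ) : ℝ :=
  Real.arctan (Real.sqrt ((m₁ : ℝ) / (m₂ : ℝ)))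

/-- `l(θ) = m₁ cos² θ - m₂ sin² θ`. -/
noncomputable def lfun (m₁ m₂ : ℕ) (θ : ℝ) : ℝ :=
  (m₁ : ℝ) * Real.cos θ ^ 2 - (m₂ : ℝ) * Real.sin θ ^ 2

/-- `(ξ, θ, α)` is a (globally defined) solution of the ODE system (*):
`ξ' = cos α · sin 2θ`, `θ' = sin α · sin 2θ`,
`α' = sin α · sin 2θ · (exp((4/g)ξ) - m) + 2 cos α · l(θ)`. -/
def IsSolution (g m₁ m₂ : ℕ) (ξ θ α : ℝ → ℝ) : Prop :=
  ∀ t : ℝ,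
    HasDerivAt ξ (Real.cos (α t) * Real.sin (2 * θ t)) t ∧
    HasDerivAt θ (Real.sin (α t) * Real.sin (2 * θ t)) t ∧
    HasDerivAt α
      (Real.sin (α t) * Real.sin (2 * θ t) *
          (Real.exp (4 / (g : ℝ) * ξ t) - mconst g m₁ m₂) +
        2 * Real.cos (α t) * lfun m₁ m₂ (θ t)) t

namespace StmtAux

open Set Metric

/-- The (autonomous) vector field of the system, on `ℝ × ℝ × ℝ`,
with coordinates `p = (ξ, θ, α)`. -/
noncomputable def vfield (g m₁ m₂ : ℕ) (p : ℝ × ℝ × ℝ) : ℝ × ℝ × ℝ :=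
  (Real.cos p.2.2 * Real.sin (2 * p.2.1),
   Real.sin p.2.2 * Real.sin (2 * p.2.1),
   Real.sin p.2.2 * Real.sin (2 * p.2.1) *
       (Real.exp (4 / (g : ℝ) * p.1) - mconst g m₁ m₂) +
     2 * Real.cos p.2.2 * lfun m₁ m₂ p.2.1)

/-- The truncated vector field: `ξ` is clamped by `C` inside the exponential. -/
noncomputable def tvf (g m₁ m₂ : ℕ) (C : ℝ) (p : ℝ × ℝ × ℝ) : ℝ × ℝ × ℝ :=
  (Real.cos p.2.2 * Real.sin (2 * p.2.1),
   Real.sin p.2.2 * Real.sin (2 * p.2.1),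
   Real.sin p.2.2 * Real.sin (2 * p.2.1) *
       (Real.exp (4 / (g : ℝ) * min p.1 C) - mconst g m₁ m₂) +
     2 * Real.cos p.2.2 * lfun m₁ m₂ p.2.1)

theorem tvf_eq_vfield (g m₁ m₂ : ℕ) {C : ℝ} {p : ℝ × ℝ × ℝ} (h : p.1 ≤ C) :
    tvf g m₁ m₂ C p = vfield g m₁ m₂ p := by
  simp [tvf, vfield, min_eq_left h]

theorem mconst_nonneg (g m₁ m₂ : ℕ) : 0 ≤ mconst g m₁ m₂ := by
  unfold mconst; positivity

theorem c_nonneg (g : ℕ) : 0 ≤ 4 / (g : ℝ) := by positivity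

/- elementary helper lemmas -/

theorem mulsub (a b a' b' : ℝ) : |a * b - a' * b'| ≤ |a| * |b - b'| + |b'| * |a - a'| := by
  have h : a * b - a' * b' = a * (b - b') + b' * (a - a') := by ring
  rw [h]
  refine (abs_add_le _ _).trans ?_
  rw [abs_mul, abs_mul]

theorem mysin (a b : ℝ) : |Real.sin a - Real.sin b| ≤ |a - b| := by
  rw [Real.sin_sub_sin]
  have h1 := Real.abs_sin_le_abs (x := (a - b) / 2)
  have h2 := Real.abs_cos_le_one ((a + b) / 2)
  calc |2 * Real.sin ((a - b) / 2) * Real.cos ((a + b) / 2)|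
      = 2 * |Real.sin ((a - b) / 2)| * |Real.cos ((a + b) / 2)| := by
        rw [abs_mul, abs_mul, abs_two]
    _ ≤ 2 * |(a - b) / 2| * 1 := by gcongr
    _ = |a - b| := by rw [abs_div]; simp [abs_two]; ring

theorem mycos (a b : ℝ) : |Real.cos a - Real.cos b| ≤ |a - b| := by
  rw [Real.cos_sub_cos]
  have h1 := Real.abs_sin_le_abs (x := (a - b) / 2)
  have h2 := Real.abs_sin_le_one ((a + b) / 2)
  calc |-2 * Real.sin ((a + b) / 2) * Real.sin ((a - b) / 2)|
      = 2 * |Real.sin ((a + b) / 2)| * |Real.sin ((a - b) / 2)| := by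
        rw [abs_mul, abs_mul]; simp [abs_two]
    _ ≤ 2 * 1 * |(a - b) / 2| := by gcongr
    _ = |a - b| := by rw [abs_div]; simp [abs_two]; ring

theorem myexp {M a b : ℝ} (ha : a ≤ M) (hb : b ≤ M) :
    |Real.exp a - Real.exp b| ≤ Real.exp M * |a - b| := by
  wlog h : b ≤ a generalizing a b
  · rw [abs_sub_comm, abs_sub_comm a b]; exact this hb ha (le_of_not_ge h)
  rw [abs_of_nonneg (sub_nonneg.2 (Real.exp_le_exp.2 h)), abs_of_nonneg (sub_nonneg.2 h)]
  have key : Real.exp a - Real.exp b = Real.exp b * (Real.exp (a - b) - 1) := by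
    rw [mul_sub, ← Real.exp_add]; ring_nf
  have e1 := Real.add_one_le_exp (-(a - b))
  have e2 : Real.exp (-(a - b)) * Real.exp (a - b) = 1 := by rw [← Real.exp_add]; simp
  have h1 : Real.exp (a - b) - 1 ≤ (a - b) * Real.exp (a - b) := by
    nlinarith [Real.exp_pos (a - b), Real.exp_pos (-(a - b))]
  have e3 : Real.exp b * Real.exp (a - b) = Real.exp a := by rw [← Real.exp_add]; ring_nf
  rw [key]
  calc Real.exp b * (Real.exp (a - b) - 1)
      ≤ Real.exp b * ((a - b) * Real.exp (a - b)) :=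
        mul_le_mul_of_nonneg_left h1 (Real.exp_pos b).le
    _ = (a - b) * (Real.exp b * Real.exp (a - b)) := by ring
    _ = (a - b) * Real.exp a := by rw [e3]
    _ ≤ (a - b) * Real.exp M := by
        have h4 : (0:ℝ) ≤ a - b := by linarith
        exact mul_le_mul_of_nonneg_left (Real.exp_le_exp.2 ha) h4
    _ = Real.exp M * (a - b) := by ring

theorem mymin (a b C : ℝ) : |min a C - min b C| ≤ |a - b| := by
  rcases le_total a C with h1 | h1 <;> rcases le_total b C with h2 | h2 <;>
    simp [min_eq_left, min_eq_right, *] <;> rw [abs_le] <;>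
    constructor <;> linarith [abs_nonneg (a - b), le_abs_self (a - b), neg_abs_le (a - b)]

theorem lfun_abs_le (m₁ m₂ : ℕ) (θ : ℝ) : |lfun m₁ m₂ θ| ≤ (m₁ : ℝ) + (m₂ : ℝ) := by
  unfold lfun
  have h1 := Real.sin_sq_le_one θ
  have h2 := Real.cos_sq_le_one θ
  have h3 : (0:ℝ) ≤ Real.sin θ ^ 2 := sq_nonneg _
  have h4 : (0:ℝ) ≤ Real.cos θ ^ 2 := sq_nonneg _
  rw [abs_le]
  constructor <;> nlinarith [Nat.cast_nonneg (α := ℝ) m₁, Nat.cast_nonneg (α := ℝ) m₂]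

theorem lfun_lip (m₁ m₂ : ℕ) (a b : ℝ) :
    |lfun m₁ m₂ a - lfun m₁ m₂ b| ≤ 2 * ((m₁ : ℝ) + (m₂ : ℝ)) * |a - b| := by
  unfold lfun
  have hc : |Real.cos a ^ 2 - Real.cos b ^ 2| ≤ 2 * |a - b| := by
    have h := mulsub (Real.cos a) (Real.cos a) (Real.cos b) (Real.cos b)
    have h1 := mycos a b
    have h2 := Real.abs_cos_le_one a
    have h3 := Real.abs_cos_le_one b
    calc |Real.cos a ^ 2 - Real.cos b ^ 2| = |Real.cos a * Real.cos a - Real.cos b * Real.cos b| := by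
          rw [pow_two, pow_two]
      _ ≤ |Real.cos a| * |Real.cos a - Real.cos b| + |Real.cos b| * |Real.cos a - Real.cos b| := h
      _ ≤ 2 * |a - b| := by
          nlinarith [abs_nonneg (Real.cos a - Real.cos b), abs_nonneg (a - b)]
  have hs : |Real.sin a ^ 2 - Real.sin b ^ 2| ≤ 2 * |a - b| := by
    have h := mulsub (Real.sin a) (Real.sin a) (Real.sin b) (Real.sin b)
    have h1 := mysin a b
    have h2 := Real.abs_sin_le_one a
    have h3 := Real.abs_sin_le_one b
    calc |Real.sin a ^ 2 - Real.sin b ^ 2| = |Real.sin a * Real.sin a - Real.sin b * Real.sin b| := by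
          rw [pow_two, pow_two]
      _ ≤ |Real.sin a| * |Real.sin a - Real.sin b| + |Real.sin b| * |Real.sin a - Real.sin b| := h
      _ ≤ 2 * |a - b| := by
          nlinarith [abs_nonneg (Real.sin a - Real.sin b), abs_nonneg (a - b)]
  have key : (m₁ : ℝ) * Real.cos a ^ 2 - (m₂ : ℝ) * Real.sin a ^ 2 -
      ((m₁ : ℝ) * Real.cos b ^ 2 - (m₂ : ℝ) * Real.sin b ^ 2) =
      (m₁ : ℝ) * (Real.cos a ^ 2 - Real.cos b ^ 2) - (m₂ : ℝ) * (Real.sin a ^ 2 - Real.sin b ^ 2) := by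
    ring
  rw [key]
  refine (abs_sub _ _).trans ?_
  rw [abs_mul, abs_mul, abs_of_nonneg (Nat.cast_nonneg (α := ℝ) m₁),
    abs_of_nonneg (Nat.cast_nonneg (α := ℝ) m₂)]
  nlinarith [Nat.cast_nonneg (α := ℝ) m₁, Nat.cast_nonneg (α := ℝ) m₂, abs_nonneg (a - b)]

/-- Lipschitz constant for the truncated field. -/
noncomputable def Kc (g m₁ m₂ : ℕ) (C : ℝ) : ℝ :=
  Real.exp (4 / (g : ℝ) * C) * (4 / (g : ℝ) + 3) + 3 * mconst g m₁ m₂ +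
    6 * ((m₁ : ℝ) + (m₂ : ℝ)) + 3

theorem Kc_nonneg (g m₁ m₂ : ℕ) (C : ℝ) : 0 ≤ Kc g m₁ m₂ C := by
  unfold Kc
  have := mconst_nonneg g m₁ m₂
  have := c_nonneg g
  positivity

/-- Norm bound for the truncated field. -/
noncomputable def Bc (g m₁ m₂ : ℕ) (C : ℝ) : ℝ :=
  Real.exp (4 / (g : ℝ) * C) + mconst g m₁ m₂ + 2 * ((m₁ : ℝ) + (m₂ : ℝ)) + 1

theorem Bc_pos (g m₁ m₂ : ℕ) (C : ℝ) : 0 < Bc g m₁ m₂ C := by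
  unfold Bc
  have := mconst_nonneg g m₁ m₂
  positivity

theorem tvf_lipschitz (g m₁ m₂ : ℕ) (C : ℝ) :
    LipschitzWith (Kc g m₁ m₂ C).toNNReal (tvf g m₁ m₂ C) := by
  apply LipschitzWith.of_dist_le_mul
  intro p q
  rw [Real.coe_toNNReal _ (Kc_nonneg g m₁ m₂ C)]
  set d := dist p q with hd
  have hd0 : 0 ≤ d := dist_nonneg
  have h1 : |p.1 - q.1| ≤ d := by
    rw [hd, Prod.dist_eq, ← Real.dist_eq]; exact le_max_left _ _
  have h2 : |p.2.1 - q.2.1| ≤ d := by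
    rw [hd, Prod.dist_eq, Prod.dist_eq, ← Real.dist_eq]
    exact le_trans (le_max_left _ _) (le_max_right _ _)
  have h3 : |p.2.2 - q.2.2| ≤ d := by
    rw [hd, Prod.dist_eq, Prod.dist_eq, ← Real.dist_eq]
    exact le_trans (le_max_right _ _) (le_max_right _ _)
  have hsin2 : |Real.sin (2 * p.2.1) - Real.sin (2 * q.2.1)| ≤ 2 * d := by
    refine (mysin _ _).trans ?_
    have : |2 * p.2.1 - 2 * q.2.1| = 2 * |p.2.1 - q.2.1| := by
      rw [← mul_sub, abs_mul, abs_two]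
    rw [this]; linarith
  have hsina : |Real.sin p.2.2 - Real.sin q.2.2| ≤ d := (mysin _ _).trans h3
  have hcosa : |Real.cos p.2.2 - Real.cos q.2.2| ≤ d := (mycos _ _).trans h3
  -- component 1
  have hc1 : |Real.cos p.2.2 * Real.sin (2 * p.2.1) - Real.cos q.2.2 * Real.sin (2 * q.2.1)| ≤
      3 * d := by
    refine (mulsub _ _ _ _).trans ?_
    have e1 := Real.abs_cos_le_one p.2.2
    have e2 := Real.abs_sin_le_one (2 * q.2.1)
    nlinarith [abs_nonneg (Real.sin (2 * p.2.1) - Real.sin (2 * q.2.1)),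
      abs_nonneg (Real.cos p.2.2 - Real.cos q.2.2)]
  -- component 2
  have hc2 : |Real.sin p.2.2 * Real.sin (2 * p.2.1) - Real.sin q.2.2 * Real.sin (2 * q.2.1)| ≤
      3 * d := by
    refine (mulsub _ _ _ _).trans ?_
    have e1 := Real.abs_sin_le_one p.2.2
    have e2 := Real.abs_sin_le_one (2 * q.2.1)
    nlinarith [abs_nonneg (Real.sin (2 * p.2.1) - Real.sin (2 * q.2.1)),
      abs_nonneg (Real.sin p.2.2 - Real.sin q.2.2)]
  -- exp term
  have hexp : |Real.exp (4 / (g : ℝ) * min p.1 C) - Real.exp (4 / (g : ℝ) * min q.1 C)| ≤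
      Real.exp (4 / (g : ℝ) * C) * (4 / (g : ℝ)) * d := by
    have hm1 : 4 / (g : ℝ) * min p.1 C ≤ 4 / (g : ℝ) * C :=
      mul_le_mul_of_nonneg_left (min_le_right _ _) (c_nonneg g)
    have hm2 : 4 / (g : ℝ) * min q.1 C ≤ 4 / (g : ℝ) * C :=
      mul_le_mul_of_nonneg_left (min_le_right _ _) (c_nonneg g)
    refine (myexp hm1 hm2).trans ?_
    have : |4 / (g : ℝ) * min p.1 C - 4 / (g : ℝ) * min q.1 C| =
        4 / (g : ℝ) * |min p.1 C - min q.1 C| := by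
      rw [← mul_sub, abs_mul, abs_of_nonneg (c_nonneg g)]
    rw [mul_assoc]
    refine mul_le_mul_of_nonneg_left ?_ (Real.exp_pos _).le
    rw [this]
    exact mul_le_mul_of_nonneg_left ((mymin _ _ _).trans h1) (c_nonneg g)
  have hexpb : |Real.exp (4 / (g : ℝ) * min q.1 C) - mconst g m₁ m₂| ≤
      Real.exp (4 / (g : ℝ) * C) + mconst g m₁ m₂ := by
    refine (abs_sub _ _).trans ?_
    rw [abs_of_nonneg (Real.exp_pos _).le, abs_of_nonneg (mconst_nonneg g m₁ m₂)]
    have : Real.exp (4 / (g : ℝ) * min q.1 C) ≤ Real.exp (4 / (g : ℝ) * C) :=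
      Real.exp_le_exp.2 (mul_le_mul_of_nonneg_left (min_le_right _ _) (c_nonneg g))
    linarith
  -- component 3
  have hc3 : |(Real.sin p.2.2 * Real.sin (2 * p.2.1) *
        (Real.exp (4 / (g : ℝ) * min p.1 C) - mconst g m₁ m₂) +
      2 * Real.cos p.2.2 * lfun m₁ m₂ p.2.1) -
      (Real.sin q.2.2 * Real.sin (2 * q.2.1) *
        (Real.exp (4 / (g : ℝ) * min q.1 C) - mconst g m₁ m₂) +
      2 * Real.cos q.2.2 * lfun m₁ m₂ q.2.1)| ≤ Kc g m₁ m₂ C * d := by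
    set A1 := Real.sin p.2.2 * Real.sin (2 * p.2.1)
    set A2 := Real.sin q.2.2 * Real.sin (2 * q.2.1)
    set E1 := Real.exp (4 / (g : ℝ) * min p.1 C) - mconst g m₁ m₂
    set E2 := Real.exp (4 / (g : ℝ) * min q.1 C) - mconst g m₁ m₂
    have hA1 : |A1| ≤ 1 := by
      rw [abs_mul]
      exact mul_le_one₀ (Real.abs_sin_le_one _) (abs_nonneg _) (Real.abs_sin_le_one _)
    have hEE : |E1 - E2| ≤ Real.exp (4 / (g : ℝ) * C) * (4 / (g : ℝ)) * d := by
      have : E1 - E2 = Real.exp (4 / (g : ℝ) * min p.1 C) -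
          Real.exp (4 / (g : ℝ) * min q.1 C) := by simp [E1, E2]
      rw [this]; exact hexp
    have hprod : |A1 * E1 - A2 * E2| ≤
        Real.exp (4 / (g : ℝ) * C) * (4 / (g : ℝ)) * d +
        (Real.exp (4 / (g : ℝ) * C) + mconst g m₁ m₂) * (3 * d) := by
      refine (mulsub _ _ _ _).trans ?_
      have t1 : |A1| * |E1 - E2| ≤ 1 * (Real.exp (4 / (g : ℝ) * C) * (4 / (g : ℝ)) * d) :=
        mul_le_mul hA1 hEE (abs_nonneg _) zero_le_one
      have t2 : |E2| * |A1 - A2| ≤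
          (Real.exp (4 / (g : ℝ) * C) + mconst g m₁ m₂) * (3 * d) :=
        mul_le_mul hexpb hc2 (abs_nonneg _)
          (add_nonneg (Real.exp_pos _).le (mconst_nonneg g m₁ m₂))
      linarith
    have hlf : |2 * Real.cos p.2.2 * lfun m₁ m₂ p.2.1 - 2 * Real.cos q.2.2 * lfun m₁ m₂ q.2.1| ≤
        6 * ((m₁ : ℝ) + (m₂ : ℝ)) * d := by
      refine (mulsub _ _ _ _).trans ?_
      have t1 : |2 * Real.cos p.2.2| ≤ 2 := by
        rw [abs_mul, abs_two]
        nlinarith [Real.abs_cos_le_one p.2.2, abs_nonneg (Real.cos p.2.2)]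
      have t2 : |lfun m₁ m₂ p.2.1 - lfun m₁ m₂ q.2.1| ≤ 2 * ((m₁ : ℝ) + (m₂ : ℝ)) * d := by
        refine (lfun_lip m₁ m₂ _ _).trans ?_
        have hm : (0:ℝ) ≤ 2 * ((m₁ : ℝ) + (m₂ : ℝ)) := by positivity
        exact mul_le_mul_of_nonneg_left h2 hm
      have t3 : |lfun m₁ m₂ q.2.1| ≤ (m₁ : ℝ) + (m₂ : ℝ) := lfun_abs_le m₁ m₂ _
      have t4 : |2 * Real.cos p.2.2 - 2 * Real.cos q.2.2| ≤ 2 * d := by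
        rw [← mul_sub, abs_mul, abs_two]; linarith
      have n1 : |2 * Real.cos p.2.2| * |lfun m₁ m₂ p.2.1 - lfun m₁ m₂ q.2.1| ≤
          2 * (2 * ((m₁ : ℝ) + (m₂ : ℝ)) * d) :=
        mul_le_mul t1 t2 (abs_nonneg _) two_pos.le
      have n2 : |lfun m₁ m₂ q.2.1| * |2 * Real.cos p.2.2 - 2 * Real.cos q.2.2| ≤
          ((m₁ : ℝ) + (m₂ : ℝ)) * (2 * d) :=
        mul_le_mul t3 t4 (abs_nonneg _) (by positivity)
      linarith
    calc |(A1 * E1 + 2 * Real.cos p.2.2 * lfun m₁ m₂ p.2.1) -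
        (A2 * E2 + 2 * Real.cos q.2.2 * lfun m₁ m₂ q.2.1)|
        ≤ |A1 * E1 - A2 * E2| +
          |2 * Real.cos p.2.2 * lfun m₁ m₂ p.2.1 - 2 * Real.cos q.2.2 * lfun m₁ m₂ q.2.1| := by
          have : (A1 * E1 + 2 * Real.cos p.2.2 * lfun m₁ m₂ p.2.1) -
              (A2 * E2 + 2 * Real.cos q.2.2 * lfun m₁ m₂ q.2.1) =
              (A1 * E1 - A2 * E2) +
              (2 * Real.cos p.2.2 * lfun m₁ m₂ p.2.1 - 2 * Real.cos q.2.2 * lfun m₁ m₂ q.2.1) := by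
            ring
          rw [this]; exact abs_add_le _ _
      _ ≤ Kc g m₁ m₂ C * d := by
          unfold Kc
          have hK := hprod
          have hL := hlf
          nlinarith [Real.exp_pos (4 / (g : ℝ) * C), mconst_nonneg g m₁ m₂]
  -- assemble
  rw [Prod.dist_eq, Prod.dist_eq]
  have hK3 : 3 * d ≤ Kc g m₁ m₂ C * d := by
    have : (3:ℝ) ≤ Kc g m₁ m₂ C := by
      unfold Kc
      have := mconst_nonneg g m₁ m₂
      have := c_nonneg g
      nlinarith [Real.exp_pos (4 / (g : ℝ) * C), Nat.cast_nonneg (α := ℝ) m₁,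
        Nat.cast_nonneg (α := ℝ) m₂]
    exact mul_le_mul_of_nonneg_right this hd0
  refine max_le ?_ (max_le ?_ ?_)
  · rw [Real.dist_eq]; exact le_trans (by exact hc1) hK3
  · rw [Real.dist_eq]; exact le_trans (by exact hc2) hK3
  · rw [Real.dist_eq]; exact hc3

theorem tvf_norm_le (g m₁ m₂ : ℕ) (C : ℝ) (p : ℝ × ℝ × ℝ) :
    ‖tvf g m₁ m₂ C p‖ ≤ Bc g m₁ m₂ C := by
  have hA : |Real.sin p.2.2 * Real.sin (2 * p.2.1)| ≤ 1 := by
    rw [abs_mul]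
    exact mul_le_one₀ (Real.abs_sin_le_one _) (abs_nonneg _) (Real.abs_sin_le_one _)
  have hB : |Real.cos p.2.2 * Real.sin (2 * p.2.1)| ≤ 1 := by
    rw [abs_mul]
    exact mul_le_one₀ (Real.abs_cos_le_one _) (abs_nonneg _) (Real.abs_sin_le_one _)
  have hE : |Real.exp (4 / (g : ℝ) * min p.1 C) - mconst g m₁ m₂| ≤
      Real.exp (4 / (g : ℝ) * C) + mconst g m₁ m₂ := by
    refine (abs_sub _ _).trans ?_
    rw [abs_of_nonneg (Real.exp_pos _).le, abs_of_nonneg (mconst_nonneg g m₁ m₂)]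
    have : Real.exp (4 / (g : ℝ) * min p.1 C) ≤ Real.exp (4 / (g : ℝ) * C) :=
      Real.exp_le_exp.2 (mul_le_mul_of_nonneg_left (min_le_right _ _) (c_nonneg g))
    linarith
  have hl := lfun_abs_le m₁ m₂ p.2.1
  have hcos := Real.abs_cos_le_one p.2.2
  have h3 : |Real.sin p.2.2 * Real.sin (2 * p.2.1) *
      (Real.exp (4 / (g : ℝ) * min p.1 C) - mconst g m₁ m₂) +
      2 * Real.cos p.2.2 * lfun m₁ m₂ p.2.1| ≤ Bc g m₁ m₂ C := by
    refine (abs_add_le _ _).trans ?_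
    have e1 : |Real.sin p.2.2 * Real.sin (2 * p.2.1) *
        (Real.exp (4 / (g : ℝ) * min p.1 C) - mconst g m₁ m₂)| ≤
        Real.exp (4 / (g : ℝ) * C) + mconst g m₁ m₂ := by
      rw [abs_mul]
      have := mul_le_mul hA hE (abs_nonneg _) zero_le_one
      linarith
    have e2 : |2 * Real.cos p.2.2 * lfun m₁ m₂ p.2.1| ≤ 2 * ((m₁ : ℝ) + (m₂ : ℝ)) := by
      rw [abs_mul, abs_mul, abs_two]
      have t1 : |Real.cos p.2.2| * |lfun m₁ m₂ p.2.1| ≤ 1 * ((m₁ : ℝ) + (m₂ : ℝ)) :=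
        mul_le_mul hcos hl (abs_nonneg _) zero_le_one
      nlinarith [abs_nonneg (lfun m₁ m₂ p.2.1)]
    unfold Bc
    linarith
  have hB1 : (1:ℝ) ≤ Bc g m₁ m₂ C := by
    unfold Bc
    nlinarith [Real.exp_pos (4 / (g : ℝ) * C), mconst_nonneg g m₁ m₂,
      Nat.cast_nonneg (α := ℝ) m₁, Nat.cast_nonneg (α := ℝ) m₂]
  rw [Prod.norm_def, Prod.norm_def]
  refine max_le ?_ (max_le ?_ ?_)
  · rw [Real.norm_eq_abs]; exact le_trans hB hB1
  · rw [Real.norm_eq_abs]; exact le_trans hA hB1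
  · rw [Real.norm_eq_abs]; exact h3

/- projections of derivatives -/

theorem hda_fst {f : ℝ → ℝ × ℝ × ℝ} {v : ℝ × ℝ × ℝ} {t : ℝ} (h : HasDerivAt f v t) :
    HasDerivAt (fun s => (f s).1) v.1 t := by
  have := (h.hasFDerivAt.fst).hasDerivAt
  simpa using this

theorem hda_snd1 {f : ℝ → ℝ × ℝ × ℝ} {v : ℝ × ℝ × ℝ} {t : ℝ} (h : HasDerivAt f v t) :
    HasDerivAt (fun s => (f s).2.1) v.2.1 t := by
  have := (h.hasFDerivAt.snd.fst).hasDerivAt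
  simpa using this

theorem hda_snd2 {f : ℝ → ℝ × ℝ × ℝ} {v : ℝ × ℝ × ℝ} {t : ℝ} (h : HasDerivAt f v t) :
    HasDerivAt (fun s => (f s).2.2) v.2.2 t := by
  have := (h.hasFDerivAt.snd.snd).hasDerivAt
  simpa using this

theorem hdw_fst {f : ℝ → ℝ × ℝ × ℝ} {v : ℝ × ℝ × ℝ} {s : Set ℝ} {t : ℝ}
    (h : HasDerivWithinAt f v s t) :
    HasDerivWithinAt (fun u => (f u).1) v.1 s t := by
  have := (h.hasFDerivWithinAt.fst).hasDerivWithinAt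
  simpa using this

/-- A priori bound on the first coordinate, from derivative bounded by 1, on a convex set. -/
theorem xi_bound_within {f : ℝ → ℝ × ℝ × ℝ} {F : ℝ × ℝ × ℝ → ℝ × ℝ × ℝ} {s : Set ℝ}
    (hconv : Convex ℝ s)
    (hF : ∀ p, |(F p).1| ≤ 1)
    (h : ∀ t ∈ s, HasDerivWithinAt f (F (f t)) s t)
    {a t : ℝ} (ha : a ∈ s) (ht : t ∈ s) :
    |(f t).1 - (f a).1| ≤ |t - a| := by
  have key := Convex.norm_image_sub_le_of_norm_hasDerivWithin_le
    (f := fun u => (f u).1) (f' := fun u => (F (f u)).1) (C := 1) (s := s)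
    (fun u hu => hdw_fst (h u hu)) (fun u _ => by rw [Real.norm_eq_abs]; exact hF _) hconv ha ht
  rw [Real.norm_eq_abs, Real.norm_eq_abs] at key
  linarith

theorem vfield_fst_le (g m₁ m₂ : ℕ) (p : ℝ × ℝ × ℝ) : |(vfield g m₁ m₂ p).1| ≤ 1 := by
  show |Real.cos p.2.2 * Real.sin (2 * p.2.1)| ≤ 1
  rw [abs_mul]
  exact mul_le_one₀ (Real.abs_cos_le_one _) (abs_nonneg _) (Real.abs_sin_le_one _)

theorem tvf_fst_le (g m₁ m₂ : ℕ) (C : ℝ) (p : ℝ × ℝ × ℝ) : |(tvf g m₁ m₂ C p).1| ≤ 1 := by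
  show |Real.cos p.2.2 * Real.sin (2 * p.2.1)| ≤ 1
  rw [abs_mul]
  exact mul_le_one₀ (Real.abs_cos_le_one _) (abs_nonneg _) (Real.abs_sin_le_one _)

/-- Existence of a solution of the (untruncated) system on `Ioo (-T) T`. -/
theorem exists_icc (g m₁ m₂ : ℕ) (T : ℝ) (hT : 0 < T) (x₀ : ℝ × ℝ × ℝ) :
    ∃ f : ℝ → ℝ × ℝ × ℝ, f 0 = x₀ ∧
      ∀ t ∈ Ioo (-T) T, HasDerivAt f (vfield g m₁ m₂ (f t)) t := by
  set C : ℝ := |x₀.1| + T with hC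
  set R : ℝ := Bc g m₁ m₂ C * T with hR
  have h0mem : (0:ℝ) ∈ Icc (-T) T := ⟨by linarith, hT.le⟩
  have hB := (Bc_pos g m₁ m₂ C).le
  have hpl : IsPicardLindelof (fun _ p => tvf g m₁ m₂ C p) (tmin := -T) (tmax := T)
      ⟨0, h0mem⟩ x₀ R.toNNReal 0 (Bc g m₁ m₂ C).toNNReal (Kc g m₁ m₂ C).toNNReal := by
    constructor
    · intro t _
      exact (tvf_lipschitz g m₁ m₂ C).lipschitzOnWith
    · intro x _
      exact continuousOn_const
    · intro t _ x _
      rw [Real.coe_toNNReal _ hB]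
      exact tvf_norm_le g m₁ m₂ C x
    · have : max (T - ((⟨0, h0mem⟩ : Icc (-T) T) : ℝ)) (((⟨0, h0mem⟩ : Icc (-T) T) : ℝ) - -T) = T := by
        simp
      rw [this, Real.coe_toNNReal _ hB, Real.coe_toNNReal _ (mul_nonneg hB hT.le), NNReal.coe_zero,
        sub_zero]
  obtain ⟨f, hf0', hf⟩ := hpl.exists_eq_forall_mem_Icc_hasDerivWithinAt₀
  have hf0 : f 0 = x₀ := hf0'
  -- a priori bound
  have hbound : ∀ t ∈ Icc (-T) T, |(f t).1 - x₀.1| ≤ |t| := by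
    intro t ht
    have h0 : (0:ℝ) ∈ Icc (-T) T := by constructor <;> linarith
    have := xi_bound_within (convex_Icc (-T) T) (tvf_fst_le g m₁ m₂ C)
      (fun u hu => hf u hu) h0 ht
    rw [hf0] at this
    simpa using this
  refine ⟨f, hf0, fun t ht => ?_⟩
  have hIcc : t ∈ Icc (-T) T := Ioo_subset_Icc_self ht
  have h1 : HasDerivAt f (tvf g m₁ m₂ C (f t)) t :=
    (hf t hIcc).hasDerivAt (Icc_mem_nhds ht.1 ht.2)
  have h2 : (f t).1 ≤ C := by
    have := hbound t hIcc
    have habs : |t| ≤ T := abs_le.2 ⟨hIcc.1, hIcc.2⟩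
    have := abs_le.1 this
    have := le_abs_self x₀.1
    simp only [hC]
    linarith [this]
  rwa [tvf_eq_vfield g m₁ m₂ h2] at h1

/-- A priori bound for global solutions. -/
theorem xi_bound_global {g m₁ m₂ : ℕ} {f : ℝ → ℝ × ℝ × ℝ}
    (h : ∀ t, HasDerivAt f (vfield g m₁ m₂ (f t)) t) (t : ℝ) :
    |(f t).1 - (f 0).1| ≤ |t| := by
  have := xi_bound_within (s := univ) convex_univ (vfield_fst_le g m₁ m₂)
    (fun u _ => (h u).hasDerivWithinAt) (mem_univ 0) (mem_univ t)
  simpa using this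

/-- Global uniqueness. -/
theorem unique_global {g m₁ m₂ : ℕ} {γ₁ γ₂ : ℝ → ℝ × ℝ × ℝ}
    (h₁ : ∀ t, HasDerivAt γ₁ (vfield g m₁ m₂ (γ₁ t)) t)
    (h₂ : ∀ t, HasDerivAt γ₂ (vfield g m₁ m₂ (γ₂ t)) t)
    (h0 : γ₁ 0 = γ₂ 0) : γ₁ = γ₂ := by
  funext t
  set T : ℝ := |t| + 1 with hT
  have hT0 : 0 < T := by positivity
  set C : ℝ := |(γ₁ 0).1| + T with hC
  have key : ∀ γ : ℝ → ℝ × ℝ × ℝ, (∀ s, HasDerivAt γ (vfield g m₁ m₂ (γ s)) s) →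
      γ 0 = γ₁ 0 →
      ∀ s ∈ Ioo (-T) T, HasDerivAt γ (tvf g m₁ m₂ C (γ s)) s ∧ γ s ∈ (univ : Set (ℝ × ℝ × ℝ)) := by
    intro γ hγ hγ0 s hs
    have hb := xi_bound_global hγ s
    have hsT : |s| ≤ T := by
      have := abs_lt.2 ⟨hs.1, hs.2⟩
      exact this.le
    have hle : (γ s).1 ≤ C := by
      have := abs_le.1 hb
      have h2 := le_abs_self (γ 0).1
      rw [hγ0] at *
      simp only [hC]
      linarith [this.2]
    rw [tvf_eq_vfield g m₁ m₂ hle]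
    exact ⟨hγ s, mem_univ _⟩
  have ht : t ∈ Ioo (-T) T := by
    constructor
    · have := neg_abs_le t; simp only [hT]; linarith
    · have := le_abs_self t; simp only [hT]; linarith
  exact ODE_solution_unique_of_mem_Ioo
    (fun _ _ => (tvf_lipschitz g m₁ m₂ C).lipschitzOnWith)
    (show (0:ℝ) ∈ Ioo (-T) T by constructor <;> [linarith; linarith])
    (key γ₁ h₁ rfl) (key γ₂ h₂ h0.symm) h0 ht

/-- Global existence. -/
theorem exists_global (g m₁ m₂ : ℕ) (x₀ : ℝ × ℝ × ℝ) :
    ∃ γ : ℝ → ℝ × ℝ × ℝ, γ 0 = x₀ ∧ ∀ t, HasDerivAt γ (vfield g m₁ m₂ (γ t)) t := by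
  have hex : ∀ n : ℕ, ∃ f : ℝ → ℝ × ℝ × ℝ, f 0 = x₀ ∧
      ∀ t ∈ Ioo (-((n:ℝ)+1)) ((n:ℝ)+1), HasDerivAt f (vfield g m₁ m₂ (f t)) t := by
    intro n
    exact exists_icc g m₁ m₂ ((n:ℝ)+1) (by positivity) x₀
  choose F hF0 hF using hex
  -- agreement
  have agree : ∀ (n k : ℕ) (t : ℝ), |t| < (n:ℝ)+1 → |t| < (k:ℝ)+1 → F n t = F k t := by
    intro n k t h1 h2
    set M : ℝ := min ((n:ℝ)+1) ((k:ℝ)+1) with hM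
    have hM0 : 0 < M := lt_min (by positivity) (by positivity)
    set C : ℝ := |x₀.1| + M with hC
    have hsub : ∀ j : ℕ, M ≤ (j:ℝ)+1 → Ioo (-M) M ⊆ Ioo (-((j:ℝ)+1)) ((j:ℝ)+1) := by
      intro j hj
      apply Ioo_subset_Ioo <;> linarith
    have key : ∀ j : ℕ, M ≤ (j:ℝ)+1 →
        ∀ s ∈ Ioo (-M) M, HasDerivAt (F j) (tvf g m₁ m₂ C (F j s)) s ∧
          F j s ∈ (univ : Set (ℝ × ℝ × ℝ)) := by
      intro j hj s hs
      have hsj : s ∈ Ioo (-((j:ℝ)+1)) ((j:ℝ)+1) := hsub j hj hs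
      -- a priori bound on Ioo (-(j+1)) (j+1)
      have hb : |(F j s).1 - x₀.1| ≤ |s| := by
        have h0 : (0:ℝ) ∈ Ioo (-((j:ℝ)+1)) ((j:ℝ)+1) := by
          constructor <;> [linarith [Nat.cast_nonneg (α := ℝ) j]; linarith [Nat.cast_nonneg (α := ℝ) j]]
        have := xi_bound_within (convex_Ioo _ _) (vfield_fst_le g m₁ m₂)
          (fun u hu => ((hF j) u hu).hasDerivWithinAt) h0 hsj
        rw [hF0 j] at this
        simpa using this
      have hle : (F j s).1 ≤ C := by
        have h3 := (abs_le.1 hb).2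
        have h4 := le_abs_self x₀.1
        have h5 : |s| ≤ M := (abs_lt.2 ⟨hs.1, hs.2⟩).le
        simp only [hC]; linarith
      rw [tvf_eq_vfield g m₁ m₂ hle]
      exact ⟨hF j s hsj, mem_univ _⟩
    have ht : t ∈ Ioo (-M) M := by
      have : |t| < M := lt_min h1 h2
      exact ⟨by linarith [neg_abs_le t], by linarith [le_abs_self t]⟩
    exact ODE_solution_unique_of_mem_Ioo
      (fun _ _ => (tvf_lipschitz g m₁ m₂ C).lipschitzOnWith)
      (show (0:ℝ) ∈ Ioo (-M) M by constructor <;> [linarith; linarith])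
      (key n (min_le_left _ _)) (key k (min_le_right _ _))
      (by rw [hF0 n, hF0 k]) ht
  refine ⟨fun t => F ⌊|t|⌋₊ t, ?_, ?_⟩
  · simp only [abs_zero, Nat.floor_zero]
    exact hF0 0
  · intro t
    set n : ℕ := ⌊|t|⌋₊ with hn
    have hlt : |t| < (n:ℝ)+1 := by
      have := Nat.lt_floor_add_one |t|
      exact_mod_cast this
    have hev : (fun s => F ⌊|s|⌋₊ s) =ᶠ[nhds t] F n := by
      have hopen : IsOpen {s : ℝ | |s| < (n:ℝ)+1} := by
        have : {s : ℝ | |s| < (n:ℝ)+1} = Metric.ball (0:ℝ) ((n:ℝ)+1) := by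
          ext s; simp [Real.dist_eq]
        rw [this]; exact Metric.isOpen_ball
      refine Filter.eventuallyEq_of_mem (hopen.mem_nhds hlt) ?_
      intro s hs
      exact agree ⌊|s|⌋₊ n s (by exact_mod_cast Nat.lt_floor_add_one |s|) hs
    have htIoo : t ∈ Ioo (-((n:ℝ)+1)) ((n:ℝ)+1) :=
      ⟨by linarith [neg_abs_le t], by linarith [le_abs_self t]⟩
    have hder : HasDerivAt (F n) (vfield g m₁ m₂ (F n t)) t := hF n t htIoo
    have heq : F n t = F ⌊|t|⌋₊ t := by rw [hn]
    rw [hev.hasDerivAt_iff]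
    rw [show (fun s => F ⌊|s|⌋₊ s) t = F n t from (heq).symm]
    exact hder

theorem vfield_contDiff (g m₁ m₂ : ℕ) : ContDiff ℝ (⊤:ℕ∞) (vfield g m₁ m₂) := by
  unfold vfield lfun
  have h1 : ContDiff ℝ (⊤:ℕ∞) (fun p : ℝ × ℝ × ℝ => p.1) := contDiff_fst
  have h21 : ContDiff ℝ (⊤:ℕ∞) (fun p : ℝ × ℝ × ℝ => p.2.1) := contDiff_fst.comp contDiff_snd
  have h22 : ContDiff ℝ (⊤:ℕ∞) (fun p : ℝ × ℝ × ℝ => p.2.2) := contDiff_snd.comp contDiff_snd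
  have hsin2 : ContDiff ℝ (⊤:ℕ∞) (fun p : ℝ × ℝ × ℝ => Real.sin (2 * p.2.1)) :=
    Real.contDiff_sin.comp (contDiff_const.mul h21)
  have hsina : ContDiff ℝ (⊤:ℕ∞) (fun p : ℝ × ℝ × ℝ => Real.sin p.2.2) :=
    Real.contDiff_sin.comp h22
  have hcosa : ContDiff ℝ (⊤:ℕ∞) (fun p : ℝ × ℝ × ℝ => Real.cos p.2.2) :=
    Real.contDiff_cos.comp h22
  have hexp : ContDiff ℝ (⊤:ℕ∞) (fun p : ℝ × ℝ × ℝ => Real.exp (4 / (g : ℝ) * p.1)) :=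
    Real.contDiff_exp.comp (contDiff_const.mul h1)
  have hlf : ContDiff ℝ (⊤:ℕ∞) (fun p : ℝ × ℝ × ℝ =>
      (m₁ : ℝ) * Real.cos p.2.1 ^ 2 - (m₂ : ℝ) * Real.sin p.2.1 ^ 2) :=
    (contDiff_const.mul ((Real.contDiff_cos.comp h21).pow 2)).sub
      (contDiff_const.mul ((Real.contDiff_sin.comp h21).pow 2))
  exact (hcosa.mul hsin2).prodMk ((hsina.mul hsin2).prodMk
    (((hsina.mul hsin2).mul (hexp.sub contDiff_const)).add
      ((contDiff_const.mul hcosa).mul hlf)))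

/-- Solutions are smooth. -/
theorem smooth_sol {g m₁ m₂ : ℕ} {γ : ℝ → ℝ × ℝ × ℝ}
    (h : ∀ t, HasDerivAt γ (vfield g m₁ m₂ (γ t)) t) : ContDiff ℝ (⊤:ℕ∞) γ := by
  have hderiv : deriv γ = fun t => vfield g m₁ m₂ (γ t) := funext fun t => (h t).deriv
  have hdiff : Differentiable ℝ γ := fun t => (h t).differentiableAt
  have hn : ∀ n : ℕ, ContDiff ℝ (n : ℕ∞) γ := by
    intro n
    induction n with
    | zero =>
      rw [show ((0:ℕ) : ℕ∞) = 0 by rfl]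
      exact contDiff_zero.mpr hdiff.continuous
    | succ n ih =>
      have : ContDiff ℝ ((n:ℕ∞) + 1) γ := by
        rw [contDiff_succ_iff_deriv]
        refine ⟨hdiff, ?_, ?_⟩
        · intro h'; exact absurd h' (by simp)
        · rw [hderiv]
          exact ((vfield_contDiff g m₁ m₂).of_le (by exact_mod_cast le_top)).comp ih
      exact_mod_cast this
  exact contDiff_infty.mpr hn

end StmtAux

/-- For every initial condition there exists a unique, smooth, globally
defined solution of (*). -/
theorem stmt0 (g m₁ m₂ : ℕ) (hg : g = 1 ∨ g = 2 ∨ g = 3 ∨ g = 4 ∨ g = 6)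
    (hm₁ : 0 < m₁) (hm₂ : 0 < m₂)
    (ξ₀ θ₀ α₀ : ℝ) :
    ∃ ξ θ α : ℝ → ℝ,
      (IsSolution g m₁ m₂ ξ θ α ∧ ξ 0 = ξ₀ ∧ θ 0 = θ₀ ∧ α 0 = α₀) ∧
      ContDiff ℝ (⊤ : ℕ∞) ξ ∧ ContDiff ℝ (⊤ : ℕ∞) θ ∧ ContDiff ℝ (⊤ : ℕ∞) α ∧
      ∀ ξ' θ' α' : ℝ → ℝ,
        IsSolution g m₁ m₂ ξ' θ' α' → ξ' 0 = ξ₀ → θ' 0 = θ₀ → α' 0 = α₀ →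
          ξ' = ξ ∧ θ' = θ ∧ α' = α := by
  obtain ⟨γ, hγ0, hγ⟩ := StmtAux.exists_global g m₁ m₂ (ξ₀, θ₀, α₀)
  set ξ : ℝ → ℝ := fun t => (γ t).1 with hξ
  set θ : ℝ → ℝ := fun t => (γ t).2.1 with hθ
  set α : ℝ → ℝ := fun t => (γ t).2.2 with hα
  have hsol : IsSolution g m₁ m₂ ξ θ α := by
    intro t
    refine ⟨StmtAux.hda_fst (hγ t), StmtAux.hda_snd1 (hγ t), StmtAux.hda_snd2 (hγ t)⟩
  have hγCD := StmtAux.smooth_sol hγ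
  refine ⟨ξ, θ, α, ⟨hsol, by rw [hξ]; simp [hγ0], by rw [hθ]; simp [hγ0], by rw [hα]; simp [hγ0]⟩,
    ?_, ?_, ?_, ?_⟩
  · exact contDiff_fst.comp hγCD
  · exact (contDiff_fst.comp contDiff_snd).comp hγCD
  · exact (contDiff_snd.comp contDiff_snd).comp hγCD
  · intro ξ' θ' α' hsol' h1 h2 h3
    set γ' : ℝ → ℝ × ℝ × ℝ := fun t => (ξ' t, θ' t, α' t) with hγ'
    have hγ'd : ∀ t, HasDerivAt γ' (StmtAux.vfield g m₁ m₂ (γ' t)) t := by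
      intro t
      exact ((hsol' t).1.prodMk ((hsol' t).2.1.prodMk (hsol' t).2.2))
    have h0 : γ' 0 = γ 0 := by
      rw [hγ0, hγ']
      simp [h1, h2, h3]
    have heq : γ' = γ := StmtAux.unique_global hγ'd hγ h0
    refine ⟨?_, ?_, ?_⟩
    · funext t; exact congrArg Prod.fst (congrFun heq t)
    · funext t; exact congrArg (fun p => p.2.1) (congrFun heq t)
    · funext t; exact congrArg (fun p => p.2.2) (congrFun heq t)
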